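/- Consider an N-way K-shot support set: let T be a nonempty finite set of size N, K a positive natural number, S a finite set with labeling y : S → T such that each relation r ∈ T has exactly K support elements (i.e., the fiber y⁻¹(r) has cardinality K for every r ∈ T), encodings e : S → E in a real inner product space E, prototype vectors v : T → E, and embeddings h : T → E. Define m = (1/(N·K)) · ∑_{s ∈ S} e(s) and, for each r ∈ T, m_r = (1/K) · ∑_{s ∈ S, y(s) = r} e(s). Then (1/K) · ∑_{s ∈ S} ⟪e(s), v(y(s))⟫ − (1/K) · ∑_{s ∈ S} (1/N) · ∑_{r ∈ T} ⟪e(s), v(r)⟫ − (1/2) · ∑_{r ∈ T} ‖v(r) − h(r)‖² = ∑_{r ∈ T} (−(1/2) · ‖v(r) − (m_r + h(r) − m)‖²) + ∑_{r ∈ T} ((1/2) · ‖m_r + h(r) − m‖² − (1/2) · ‖h(r)‖²). -/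

import Mathlib

open Finset Real
open scoped RealInnerProductSpace

/-- Rewriting step in the appendix: in the `N`-way `K`-shot setting, the quadratic lower
bound on the log-posterior equals, up to a constant independent of `v`, the sum over
relations of `−(1/2)` times the squared distance from `v r` to `m_r + h r − m`. -/
theorem quadratic_lower_bound_rewriting {S T E : Type*} [Fintype S] [Fintype T]
    [DecidableEq T] [Nonempty T] [NormedAddCommGroup E] [InnerProductSpace ℝ E]
    (N K : ℕ) (hN : Fintype.card T = N) (hK : 0 < K) (y : S → T)
    (hfiber : ∀ r : T, (Finset.univ.filter (fun s => y s = r)).card = K)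
    (e : S → E) (v : T → E) (h : T → E) (m : E) (mr : T → E)
    (hm : m = (1 / ((N : ℝ) * (K : ℝ))) • ∑ s, e s)
    (hmr : ∀ r : T, mr r = (1 / (K : ℝ)) • ∑ s ∈ Finset.univ.filter (fun s => y s = r), e s) :
    (1 / (K : ℝ)) * ∑ s, ⟪e s, v (y s)⟫ -
        (1 / (K : ℝ)) * ∑ s, (1 / (N : ℝ)) * ∑ r, ⟪e s, v r⟫ -
        (1 / 2) * ∑ r, ‖v r - h r‖ ^ 2 =
      ∑ r, (-(1 / 2) * ‖v r - (mr r + h r - m)‖ ^ 2) +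
        ∑ r, ((1 / 2) * ‖mr r + h r - m‖ ^ 2 - (1 / 2) * ‖h r‖ ^ 2) := by
  have hNpos : 0 < N := by
    rw [← hN]; exact Fintype.card_pos
  have hKne : (K : ℝ) ≠ 0 := by positivity
  have hNne : (N : ℝ) ≠ 0 := by positivity
  -- first sum
  have h1 : ∑ s, ⟪e s, v (y s)⟫ = ∑ r, (K : ℝ) * ⟪mr r, v r⟫ := by
    rw [← Finset.sum_fiberwise_of_maps_to (g := y)
      (fun x _ => Finset.mem_univ (y x)) (fun s => ⟪e s, v (y s)⟫)]
    refine Finset.sum_congr rfl fun r _ => ?_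
    have : ∑ s ∈ Finset.univ.filter (fun s => y s = r), ⟪e s, v (y s)⟫
        = ∑ s ∈ Finset.univ.filter (fun s => y s = r), ⟪e s, v r⟫ := by
      refine Finset.sum_congr rfl fun s hs => ?_
      rw [(Finset.mem_filter.mp hs).2]
    rw [this, ← sum_inner, hmr r, real_inner_smul_left]
    field_simp
  -- second sum
  have h2 : ∑ s, (1 / (N : ℝ)) * ∑ r, ⟪e s, v r⟫ = ∑ r, (K : ℝ) * ⟪m, v r⟫ := by
    rw [← Finset.mul_sum, Finset.sum_comm]
    rw [Finset.mul_sum]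
    refine Finset.sum_congr rfl fun r _ => ?_
    rw [← sum_inner, hm, real_inner_smul_left]
    field_simp
  rw [h1, h2, Finset.mul_sum, Finset.mul_sum, Finset.mul_sum, ← Finset.sum_add_distrib,
    ← Finset.sum_sub_distrib, ← Finset.sum_sub_distrib]
  refine Finset.sum_congr rfl fun r _ => ?_
  have hk : (1 / (K:ℝ)) * ((K:ℝ) * ⟪mr r, v r⟫) = ⟪mr r, v r⟫ := by field_simp
  have hk2 : (1 / (K:ℝ)) * ((K:ℝ) * ⟪m, v r⟫) = ⟪m, v r⟫ := by field_simp
  rw [hk, hk2, norm_sub_sq_real, norm_sub_sq_real]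
  simp only [inner_add_right, inner_sub_right, inner_add_left, inner_sub_left]
  rw [real_inner_comm (v r) (mr r), real_inner_comm (v r) m]
  ring
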